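/- Let M* = ⟨X,A,P*,R*,γ⟩ and M̂ = ⟨X,A,P̂,R̂,γ⟩ be finite MDPs with rewards bounded by R_max and V_max ≥ R_max/(1-γ), and suppose for all (x,a): ||P*(·|x,a) - P̂(·|x,a)||₁ ≤ e_P(x,a) and |R*(x,a) - R̂(x,a)| ≤ e_P(x,a)R_max. Assume there exists κ < 1/γ such that Σ_{x',a'} e_P(x',a')π_b(a'|x')P*(x'|x,a) ≤ κ e_P(x,a) for all (x,a). Then any policy π satisfying Σ_a e_P(x,a)|π(a|x) - π_b(a|x)| ≤ ε for all x obeys, for every (x,a): |Q^π_{M*}(x,a) - Q^π_{M̂}(x,a)| ≤ (e_P(x,a)/(1-κγ) + γε/((1-γ)(1-κγ)))V_max. -/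

import Mathlib

/-- Lemma 1 of Soft-SPIBB: under the κ-smoothness assumption, any
`(π_b, e_P, ε)`-constrained policy `π` has its `Q`-function in the true MDP close
to its `Q`-function in the estimated MDP. -/
theorem soft_spibb_lemma_one
    {X A : Type*} [Fintype X] [Fintype A]
    (Pstar Phat : X → A → X → ℝ) (Rstar Rhat : X → A → ℝ)
    (γ Rmax Vmax κ ε : ℝ) (eP : X → A → ℝ)
    (hγ0 : 0 ≤ γ) (hγ1 : γ < 1)
    (hRmax : 0 ≤ Rmax) (hVmax : Rmax / (1 - γ) ≤ Vmax)
    (hκ0 : 0 ≤ κ) (hκγ : κ * γ < 1) (hε : 0 ≤ ε)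
    (heP : ∀ x a, 0 ≤ eP x a)
    (hPsnn : ∀ x a x', 0 ≤ Pstar x a x') (hPssum : ∀ x a, ∑ x', Pstar x a x' = 1)
    (hPhnn : ∀ x a x', 0 ≤ Phat x a x') (hPhsum : ∀ x a, ∑ x', Phat x a x' = 1)
    (hRb : ∀ x a, |Rstar x a| ≤ Rmax)
    (hPerr : ∀ x a, ∑ x', |Pstar x a x' - Phat x a x'| ≤ eP x a)
    (hRerr : ∀ x a, |Rstar x a - Rhat x a| ≤ eP x a * Rmax)
    (π πb : X → A → ℝ)
    (hπnn : ∀ x a, 0 ≤ π x a) (hπsum : ∀ x, ∑ a, π x a = 1)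
    (hπbnn : ∀ x a, 0 ≤ πb x a) (hπbsum : ∀ x, ∑ a, πb x a = 1)
    -- Assumption 1 (κ-smoothness)
    (hsmooth : ∀ x a, ∑ x', ∑ a', eP x' a' * πb x' a' * Pstar x a x' ≤ κ * eP x a)
    -- (π_b, e_P, ε)-constrained
    (hcon : ∀ x, ∑ a, eP x a * |π x a - πb x a| ≤ ε)
    -- Q-functions of π in M* and M̂ (Bellman fixed points)
    (Qstar Qhat : X → A → ℝ)
    (hQstar : ∀ x a, Qstar x a =
      Rstar x a + γ * ∑ x', Pstar x a x' * ∑ a', π x' a' * Qstar x' a')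
    (hQhat : ∀ x a, Qhat x a =
      Rhat x a + γ * ∑ x', Phat x a x' * ∑ a', π x' a' * Qhat x' a')
    (hQhatB : ∀ x a, |Qhat x a| ≤ Vmax) :
    ∀ x a, |Qstar x a - Qhat x a| ≤
      (eP x a / (1 - κ * γ) + γ * ε / ((1 - γ) * (1 - κ * γ))) * Vmax := by

  intro x a
  have hγ' : 0 < 1 - γ := by linarith
  have hκγ' : 0 < 1 - κ * γ := by linarith
  have hVmax0 : 0 ≤ Vmax := le_trans (by positivity) hVmax
  set c1 : ℝ := Vmax / (1 - κ * γ) with hc1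
  set c2 : ℝ := γ * ε * Vmax / ((1 - γ) * (1 - κ * γ)) with hc2
  have hc10 : 0 ≤ c1 := by positivity
  set f : X → A → ℝ := fun x a => c1 * eP x a + c2 with hfdef
  set D : X → A → ℝ := fun x a => |Qstar x a - Qhat x a| with hDdef
  -- |V̂| ≤ Vmax
  have hVhat : ∀ x', |∑ a', π x' a' * Qhat x' a'| ≤ Vmax := by
    intro x'
    calc |∑ a', π x' a' * Qhat x' a'| ≤ ∑ a', |π x' a' * Qhat x' a'| :=
          Finset.abs_sum_le_sum_abs _ _
      _ ≤ ∑ a', π x' a' * Vmax := by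
          refine Finset.sum_le_sum fun a' _ => ?_
          rw [abs_mul, abs_of_nonneg (hπnn x' a')]
          exact mul_le_mul_of_nonneg_left (hQhatB x' a') (hπnn x' a')
      _ = Vmax := by rw [← Finset.sum_mul, hπsum, one_mul]
  -- key recursive bound
  have hkey : ∀ x a, D x a ≤ eP x a * Vmax +
      γ * ∑ x', Pstar x a x' * ∑ a', π x' a' * D x' a' := by
    intro x a
    have hdecomp : Qstar x a - Qhat x a =
        (Rstar x a - Rhat x a)
        + γ * ∑ x', (Pstar x a x' - Phat x a x') * ∑ a', π x' a' * Qhat x' a'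
        + γ * ∑ x', Pstar x a x' * ∑ a', π x' a' * (Qstar x' a' - Qhat x' a') := by
      rw [hQstar x a, hQhat x a]
      simp only [mul_sub, sub_mul, Finset.sum_sub_distrib]
      ring
    have h2 : |∑ x', (Pstar x a x' - Phat x a x') * ∑ a', π x' a' * Qhat x' a'|
        ≤ eP x a * Vmax := by
      calc |∑ x', (Pstar x a x' - Phat x a x') * ∑ a', π x' a' * Qhat x' a'|
          ≤ ∑ x', |(Pstar x a x' - Phat x a x') * ∑ a', π x' a' * Qhat x' a'| :=
            Finset.abs_sum_le_sum_abs _ _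
        _ ≤ ∑ x', |Pstar x a x' - Phat x a x'| * Vmax := by
            refine Finset.sum_le_sum fun x' _ => ?_
            rw [abs_mul]
            exact mul_le_mul_of_nonneg_left (hVhat x') (abs_nonneg _)
        _ = (∑ x', |Pstar x a x' - Phat x a x'|) * Vmax := by rw [Finset.sum_mul]
        _ ≤ eP x a * Vmax := mul_le_mul_of_nonneg_right (hPerr x a) hVmax0
    have h3 : |∑ x', Pstar x a x' * ∑ a', π x' a' * (Qstar x' a' - Qhat x' a')|
        ≤ ∑ x', Pstar x a x' * ∑ a', π x' a' * D x' a' := by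
      calc |∑ x', Pstar x a x' * ∑ a', π x' a' * (Qstar x' a' - Qhat x' a')|
          ≤ ∑ x', |Pstar x a x' * ∑ a', π x' a' * (Qstar x' a' - Qhat x' a')| :=
            Finset.abs_sum_le_sum_abs _ _
        _ ≤ ∑ x', Pstar x a x' * ∑ a', π x' a' * D x' a' := by
            refine Finset.sum_le_sum fun x' _ => ?_
            rw [abs_mul, abs_of_nonneg (hPsnn x a x')]
            refine mul_le_mul_of_nonneg_left ?_ (hPsnn x a x')
            calc |∑ a', π x' a' * (Qstar x' a' - Qhat x' a')|
                ≤ ∑ a', |π x' a' * (Qstar x' a' - Qhat x' a')| :=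
                  Finset.abs_sum_le_sum_abs _ _
              _ = ∑ a', π x' a' * D x' a' := by
                  refine Finset.sum_congr rfl fun a' _ => ?_
                  rw [abs_mul, abs_of_nonneg (hπnn x' a')]
    have habs : D x a ≤ |Rstar x a - Rhat x a|
        + γ * |∑ x', (Pstar x a x' - Phat x a x') * ∑ a', π x' a' * Qhat x' a'|
        + γ * |∑ x', Pstar x a x' * ∑ a', π x' a' * (Qstar x' a' - Qhat x' a')| := by
      rw [hDdef]
      simp only []
      rw [hdecomp]
      calc |_ + _ + _| ≤ |(Rstar x a - Rhat x a)
            + γ * ∑ x', (Pstar x a x' - Phat x a x') * ∑ a', π x' a' * Qhat x' a'|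
          + |γ * ∑ x', Pstar x a x' * ∑ a', π x' a' * (Qstar x' a' - Qhat x' a')| :=
            abs_add_le _ _
        _ ≤ |Rstar x a - Rhat x a|
            + |γ * ∑ x', (Pstar x a x' - Phat x a x') * ∑ a', π x' a' * Qhat x' a'|
            + |γ * ∑ x', Pstar x a x' * ∑ a', π x' a' * (Qstar x' a' - Qhat x' a')| := by
            gcongr
            exact abs_add_le _ _
        _ = _ := by rw [abs_mul, abs_mul, abs_of_nonneg hγ0]
    have hRle : Rmax ≤ (1 - γ) * Vmax := by
      rw [div_le_iff₀ hγ'] at hVmax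
      linarith [hVmax]
    have h1 := hRerr x a
    have heP' := heP x a
    nlinarith [habs, h2, h3, mul_le_mul_of_nonneg_left hRle heP',
      mul_le_mul_of_nonneg_left h3 hγ0, mul_le_mul_of_nonneg_left h2 hγ0]
  -- π-weighted eP bound
  have hπeP : ∀ x', ∑ a', π x' a' * eP x' a' ≤ (∑ a', πb x' a' * eP x' a') + ε := by
    intro x'
    have : ∑ a', π x' a' * eP x' a'
        ≤ ∑ a', (πb x' a' * eP x' a' + eP x' a' * |π x' a' - πb x' a'|) := by
      refine Finset.sum_le_sum fun a' _ => ?_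
      have h := le_abs_self (π x' a' - πb x' a')
      nlinarith [heP x' a']
    rw [Finset.sum_add_distrib] at this
    linarith [hcon x', this]
  -- f is a super-fixed point
  have hfsup : ∀ x a, eP x a * Vmax +
      γ * ∑ x', Pstar x a x' * ∑ a', π x' a' * f x' a' ≤ f x a := by
    intro x a
    have hinner : ∀ x', ∑ a', π x' a' * f x' a'
        ≤ c1 * ((∑ a', πb x' a' * eP x' a') + ε) + c2 := by
      intro x'
      have : ∑ a', π x' a' * f x' a'
          = c1 * (∑ a', π x' a' * eP x' a') + c2 := by
        simp only [hfdef, mul_add, Finset.sum_add_distrib, Finset.mul_sum,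
          ← Finset.sum_mul, hπsum x', one_mul]
        congr 1
        exact Finset.sum_congr rfl fun a' _ => by ring
      rw [this]
      have := hπeP x'
      nlinarith [hc10]
    have houter : ∑ x', Pstar x a x' * ∑ a', π x' a' * f x' a'
        ≤ c1 * (κ * eP x a) + c1 * ε + c2 := by
      calc ∑ x', Pstar x a x' * ∑ a', π x' a' * f x' a'
          ≤ ∑ x', Pstar x a x' * (c1 * ((∑ a', πb x' a' * eP x' a') + ε) + c2) := by
            refine Finset.sum_le_sum fun x' _ => ?_
            exact mul_le_mul_of_nonneg_left (hinner x') (hPsnn x a x')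
        _ = c1 * (∑ x', ∑ a', eP x' a' * πb x' a' * Pstar x a x')
            + (c1 * ε + c2) * ∑ x', Pstar x a x' := by
            rw [Finset.mul_sum, Finset.mul_sum, ← Finset.sum_add_distrib]
            refine Finset.sum_congr rfl fun x' _ => ?_
            rw [show (∑ a' : A, eP x' a' * πb x' a' * Pstar x a x')
                = (∑ a' : A, πb x' a' * eP x' a') * Pstar x a x' from by
              rw [Finset.sum_mul]
              exact Finset.sum_congr rfl fun a' _ => by ring]
            ring
        _ ≤ c1 * (κ * eP x a) + c1 * ε + c2 := by
            rw [hPssum x a, mul_one]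
            have := hsmooth x a
            nlinarith [hc10]
    have e1 : Vmax + γ * κ * c1 = c1 := by
      rw [hc1, div_eq_mul_inv]
      have h := mul_inv_cancel₀ hκγ'.ne'
      linear_combination -Vmax * h
    have e2 : γ * c1 * ε + γ * c2 = c2 := by
      simp only [hc1, hc2, div_eq_mul_inv, mul_inv]
      have hK := mul_inv_cancel₀ hγ'.ne'
      linear_combination (-γ * ε * Vmax * (1 - κ * γ)⁻¹) * hK
    have heP' := heP x a
    simp only [hfdef]
    nlinarith [mul_le_mul_of_nonneg_left houter hγ0]
  -- contraction argument
  obtain ⟨⟨x₀, a₀⟩, -, hmax⟩ := Finset.exists_max_image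
    (Finset.univ ×ˢ Finset.univ) (fun p : X × A => D p.1 p.2 - f p.1 p.2)
    ⟨(x, a), Finset.mem_univ _⟩
  have hM : ∀ x' a', D x' a' - f x' a' ≤ D x₀ a₀ - f x₀ a₀ := by
    intro x' a'
    exact hmax (x', a') (Finset.mem_univ _)
  set M : ℝ := D x₀ a₀ - f x₀ a₀ with hMdef
  have hstep : M ≤ γ * M := by
    have h1 := hkey x₀ a₀
    have h2 := hfsup x₀ a₀
    have h3 : ∑ x', Pstar x₀ a₀ x' * ∑ a', π x' a' * D x' a'
        - ∑ x', Pstar x₀ a₀ x' * ∑ a', π x' a' * f x' a' ≤ M := by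
      have hinner : ∀ x', (∑ a', π x' a' * D x' a') - ∑ a', π x' a' * f x' a' ≤ M := by
        intro x'
        rw [← Finset.sum_sub_distrib]
        calc ∑ a', (π x' a' * D x' a' - π x' a' * f x' a')
            ≤ ∑ a', π x' a' * M := by
              refine Finset.sum_le_sum fun a' _ => ?_
              rw [← mul_sub]
              exact mul_le_mul_of_nonneg_left (hM x' a') (hπnn x' a')
          _ = M := by rw [← Finset.sum_mul, hπsum, one_mul]
      rw [← Finset.sum_sub_distrib]
      calc ∑ x', (Pstar x₀ a₀ x' * ∑ a', π x' a' * D x' a'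
              - Pstar x₀ a₀ x' * ∑ a', π x' a' * f x' a')
          ≤ ∑ x', Pstar x₀ a₀ x' * M := by
            refine Finset.sum_le_sum fun x' _ => ?_
            rw [← mul_sub]
            exact mul_le_mul_of_nonneg_left (hinner x') (hPsnn x₀ a₀ x')
        _ = M := by rw [← Finset.sum_mul, hPssum, one_mul]
    nlinarith [mul_le_mul_of_nonneg_left h3 hγ0]
  have hM0 : M ≤ 0 := by nlinarith
  have hfin : D x a ≤ f x a := by
    have := hM x a
    linarith
  calc |Qstar x a - Qhat x a| = D x a := rfl
    _ ≤ f x a := hfin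
    _ = (eP x a / (1 - κ * γ) + γ * ε / ((1 - γ) * (1 - κ * γ))) * Vmax := by
        simp only [hfdef, hc1, hc2]
        ring
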